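/- For any odd prime p, the polynomial T^8 + p^4 is irreducible over the rational numbers. -/

import Mathlib

open Polynomial IntermediateField

lemma no_rat_sqrt_two (q : ℚ) : q ^ 2 ≠ 2 := by
  intro h
  apply irrational_sqrt_two
  refine ⟨|q|, ?_⟩
  have h2 : ((q : ℝ)) ^ 2 = 2 := by exact_mod_cast h
  rw [show ((|q| : ℚ) : ℝ) = |(q : ℝ)| by push_cast; rfl, ← Real.sqrt_sq_eq_abs, h2]

lemma scalar_contra (t A B ε : ℚ) (hε : ε = 1 ∨ ε = -1)
    (h1 : A ^ 2 = t ^ 4 * B ^ 2) (h2 : 2 * A * B = ε) : False := by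
  have hfac : (A - t ^ 2 * B) * (A + t ^ 2 * B) = 0 := by nlinarith [h1]
  have key : 2 * t ^ 2 * B ^ 2 = 1 := by
    rcases mul_eq_zero.mp hfac with h | h
    · have hA : A = t ^ 2 * B := by linarith
      rw [hA] at h2
      rcases hε with rfl | rfl
      · linear_combination h2
      · nlinarith [sq_nonneg (t * B)]
    · have hA : A = -(t ^ 2 * B) := by linarith
      rw [hA] at h2
      rcases hε with rfl | rfl
      · nlinarith [sq_nonneg (t * B)]
      · linear_combination -h2
  exact no_rat_sqrt_two (2 * t * B) (by nlinarith)

lemma linear_repr (s : ℚ[X]) (h : s.natDegree < 2) :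
    s = C (s.coeff 0) + C (s.coeff 1) * X := by
  ext n
  rcases n with _ | _ | n
  · simp
  · simp
  · simp only [coeff_add, coeff_C, coeff_C_mul, coeff_X]
    rw [coeff_eq_zero_of_natDegree_lt (by omega)]
    norm_num

lemma cubic_repr (s : ℚ[X]) (h : s.natDegree < 4) :
    s = C (s.coeff 0) + C (s.coeff 1) * X + C (s.coeff 2) * X ^ 2 + C (s.coeff 3) * X ^ 3 := by
  ext n
  rcases n with _ | _ | _ | _ | n
  · simp
  · simp
  · simp
  · simp
  · simp only [coeff_add, coeff_C, coeff_C_mul, coeff_X, coeff_X_pow]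
    rw [coeff_eq_zero_of_natDegree_lt (by omega)]
    have h2 : ¬ (n + 1 + 1 + 1 + 1 = 2) := by omega
    have h3 : ¬ (n + 1 + 1 + 1 + 1 = 3) := by omega
    simp [h2, h3]

lemma no_sqrt_quadratic (t : ℚ) (q : ℚ[X]) : ¬ ((X ^ 2 + C (t ^ 4) : ℚ[X]) ∣ q ^ 2 - X) := by
  intro hdvd
  set D : ℚ[X] := X ^ 2 + C (t ^ 4) with hDdef
  have hD : D.Monic := monic_X_pow_add_C _ two_ne_zero
  set s : ℚ[X] := q %ₘ D with hsdef
  have hqs : D ∣ q - s := ⟨q /ₘ D, by rw [hsdef, modByMonic_eq_sub_mul_div q D]; ring⟩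
  have hdvd2 : D ∣ s ^ 2 - X := by
    have h3 : s ^ 2 - X = (q ^ 2 - X) - (q - s) * (q + s) := by ring
    rw [h3]; exact dvd_sub hdvd (hqs.mul_right _)
  have hdegD : D.degree = 2 := degree_X_pow_add_C (by norm_num) _
  have hdeg : s.natDegree < 2 := by
    rcases eq_or_ne s 0 with h | h
    · simp [h]
    · exact (natDegree_lt_iff_degree_lt h).mpr (by
        rw [show ((2:ℕ):WithBot ℕ) = D.degree from hdegD.symm]
        exact degree_modByMonic_lt q hD)
  set a := s.coeff 0 with ha
  set b := s.coeff 1 with hb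
  have hs2 : s = C a + C b * X := linear_repr s hdeg
  set θ := AdjoinRoot.root D with hθ
  set φ := algebraMap ℚ (AdjoinRoot D) with hφ
  have hroot0 : (aeval θ D) = 0 := by rw [AdjoinRoot.aeval_eq, AdjoinRoot.mk_self]
  have hroot : θ ^ 2 = -(φ t) ^ 4 := by
    have h := hroot0
    simp only [hDdef, map_add, map_pow, aeval_X, aeval_C, ← hφ] at h
    linear_combination h
  obtain ⟨m, hm⟩ := hdvd2
  have e1 : (aeval θ s) ^ 2 = θ := by
    have h := congrArg (aeval θ) hm
    rw [map_sub, map_pow, aeval_X, map_mul, hroot0, zero_mul] at h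
    linear_combination h
  have hα : aeval θ s = φ a + φ b * θ := by
    conv_lhs => rw [hs2]
    simp only [map_add, map_mul, aeval_X, aeval_C, ← hφ]
  have key : (φ a + φ b * θ) ^ 2 = θ := by rw [← hα]; exact e1
  set r : ℚ[X] := C (a ^ 2 - t ^ 4 * b ^ 2) + C (2 * a * b - 1) * X with hr
  have hr0 : AdjoinRoot.mk D r = 0 := by
    rw [← AdjoinRoot.aeval_eq, hr, map_add, map_mul, aeval_C, aeval_C, aeval_X]
    simp only [map_sub, map_mul, map_pow, map_one, map_ofNat, ← hθ, ← hφ]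
    linear_combination key - (φ b) ^ 2 * hroot
  have hrz : r = 0 := by
    refine eq_zero_of_dvd_of_degree_lt (AdjoinRoot.mk_eq_zero.mp hr0) ?_
    rw [hdegD]
    have h1 : r.degree ≤ 1 := by rw [hr]; compute_degree
    exact lt_of_le_of_lt h1 (by norm_num)
  have h0 : a ^ 2 - t ^ 4 * b ^ 2 = 0 := by
    have h := congrArg (fun f => coeff f 0) hrz
    simp only [hr, coeff_add, coeff_C_mul, coeff_C, coeff_X_zero, coeff_zero, mul_zero,
      add_zero, if_pos rfl] at h
    exact h
  have h1 : 2 * a * b - 1 = 0 := by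
    have h := congrArg (fun f => coeff f 1) hrz
    simp only [hr, coeff_add, coeff_C_mul, coeff_C, coeff_X_one, coeff_zero, mul_one,
      if_neg (by norm_num : ¬ (1:ℕ) = 0), zero_add] at h
    exact h
  exact scalar_contra t a b 1 (Or.inl rfl) (by linarith) (by linarith)

lemma no_sqrt_quartic (t : ℚ) (q : ℚ[X]) : ¬ ((X ^ 4 + C (t ^ 4) : ℚ[X]) ∣ q ^ 2 - X) := by
  intro hdvd
  set D : ℚ[X] := X ^ 4 + C (t ^ 4) with hDdef
  have hD : D.Monic := monic_X_pow_add_C _ four_ne_zero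
  set s : ℚ[X] := q %ₘ D with hsdef
  have hqs : D ∣ q - s := ⟨q /ₘ D, by rw [hsdef, modByMonic_eq_sub_mul_div q D]; ring⟩
  have hdvd2 : D ∣ s ^ 2 - X := by
    have h3 : s ^ 2 - X = (q ^ 2 - X) - (q - s) * (q + s) := by ring
    rw [h3]; exact dvd_sub hdvd (hqs.mul_right _)
  have hdegD : D.degree = 4 := degree_X_pow_add_C (by norm_num) _
  have hdeg : s.natDegree < 4 := by
    rcases eq_or_ne s 0 with h | h
    · simp [h]
    · exact (natDegree_lt_iff_degree_lt h).mpr (by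
        rw [show ((4:ℕ):WithBot ℕ) = D.degree from hdegD.symm]
        exact degree_modByMonic_lt q hD)
  set a := s.coeff 0 with ha
  set b := s.coeff 1 with hb
  set c := s.coeff 2 with hc
  set d := s.coeff 3 with hd
  have hs2 : s = C a + C b * X + C c * X ^ 2 + C d * X ^ 3 := cubic_repr s hdeg
  set θ := AdjoinRoot.root D with hθ
  set φ := algebraMap ℚ (AdjoinRoot D) with hφ
  have hroot0 : (aeval θ D) = 0 := by rw [AdjoinRoot.aeval_eq, AdjoinRoot.mk_self]
  have hroot : θ ^ 4 = -(φ t) ^ 4 := by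
    have h := hroot0
    simp only [hDdef, map_add, map_pow, aeval_X, aeval_C, ← hφ] at h
    linear_combination h
  obtain ⟨m, hm⟩ := hdvd2
  have e1 : (aeval θ s) ^ 2 = θ := by
    have h := congrArg (aeval θ) hm
    rw [map_sub, map_pow, aeval_X, map_mul, hroot0, zero_mul] at h
    linear_combination h
  have hrootneg : (aeval (-θ) D) = 0 := by
    simp only [hDdef, map_add, map_pow, aeval_X, aeval_C, ← hφ]
    linear_combination hroot
  have e2 : (aeval (-θ) s) ^ 2 = -θ := by
    have h := congrArg (aeval (-θ)) hm
    rw [map_sub, map_pow, aeval_X, map_mul, hrootneg, zero_mul] at h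
    linear_combination h
  have hα : aeval θ s = φ a + φ b * θ + φ c * θ ^ 2 + φ d * θ ^ 3 := by
    conv_lhs => rw [hs2]
    simp only [map_add, map_mul, map_pow, aeval_X, aeval_C, ← hφ]
  have hα' : aeval (-θ) s = φ a - φ b * θ + φ c * θ ^ 2 - φ d * θ ^ 3 := by
    conv_lhs => rw [hs2]
    simp only [map_add, map_mul, map_pow, aeval_X, aeval_C, ← hφ]
    ring
  set A := a ^ 2 - t ^ 4 * c ^ 2 + 2 * t ^ 4 * b * d with hA
  set B := 2 * a * c - b ^ 2 + t ^ 4 * d ^ 2 with hB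
  have h4 : aeval θ s * aeval (-θ) s = φ A + φ B * θ ^ 2 := by
    rw [hα, hα', hA, hB]
    simp only [map_add, map_sub, map_mul, map_pow, map_ofNat]
    linear_combination ((φ c) ^ 2 - 2 * (φ b) * (φ d) - (φ d) ^ 2 * θ ^ 2) * hroot
  have key : (φ A + φ B * θ ^ 2) ^ 2 = -θ ^ 2 := by
    rw [← h4, mul_pow, e1, e2]
    ring
  set r : ℚ[X] := C (A ^ 2 - t ^ 4 * B ^ 2) + C (2 * A * B + 1) * X ^ 2 with hr
  have hr0 : AdjoinRoot.mk D r = 0 := by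
    rw [← AdjoinRoot.aeval_eq, hr, map_add, map_mul, aeval_C, aeval_C, map_pow, aeval_X]
    simp only [map_add, map_sub, map_mul, map_pow, map_one, map_ofNat, ← hθ, ← hφ]
    linear_combination key - (φ B) ^ 2 * hroot
  have hrz : r = 0 := by
    refine eq_zero_of_dvd_of_degree_lt (AdjoinRoot.mk_eq_zero.mp hr0) ?_
    rw [hdegD]
    have h1 : r.degree ≤ 2 := by rw [hr]; compute_degree
    exact lt_of_le_of_lt h1 (by norm_num)
  have h0 : A ^ 2 - t ^ 4 * B ^ 2 = 0 := by
    have h := congrArg (fun f => coeff f 0) hrz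
    simp only [hr, coeff_add, coeff_C_mul, coeff_C, coeff_X_pow, coeff_zero, mul_zero,
      add_zero, if_pos rfl, if_neg (by norm_num : ¬ (0:ℕ) = 2)] at h
    exact h
  have h1 : 2 * A * B + 1 = 0 := by
    have h := congrArg (fun f => coeff f 2) hrz
    simp only [hr, coeff_add, coeff_C_mul, coeff_C, coeff_X_pow, coeff_zero, mul_one, if_true,
      if_pos rfl, if_neg (by norm_num : ¬ (2:ℕ) = 0), zero_add] at h
    exact h
  exact scalar_contra t A B (-1) (Or.inr rfl) (by linarith) (by linarith)

lemma irr2 (t : ℚ) (ht : 0 < t) : Irreducible ((X : ℚ[X]) ^ 2 + C (t ^ 4)) := by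
  have h := X_pow_sub_C_irreducible_of_prime (K := ℚ) Nat.prime_two (a := -(t ^ 4))
    (fun b hb => by nlinarith [sq_nonneg b, pow_pos ht 4])
  rwa [map_neg, sub_neg_eq_add] at h

lemma irr4 (t : ℚ) (ht : 0 < t) : Irreducible ((X : ℚ[X]) ^ 4 + C (t ^ 4)) := by
  have hcomp : (X : ℚ[X]) ^ 4 + C (t ^ 4) = ((X : ℚ[X]) ^ 2 + C (t ^ 4)).comp (X ^ 2) := by
    simp only [add_comp, pow_comp, X_comp, C_comp]
    ring
  rw [hcomp]
  refine Polynomial.irreducible_comp (monic_X_pow_add_C _ two_ne_zero) (monic_X_pow 2)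
    (irr2 t ht) ?_
  intro E _ _ x hx
  simp only [Polynomial.map_pow, map_X]
  apply X_pow_sub_C_irreducible_of_prime Nat.prime_two
  intro b hb
  have hint : IsIntegral ℚ x :=
    minpoly.ne_zero_iff.mp (hx ▸ (monic_X_pow_add_C (t ^ 4) two_ne_zero).ne_zero)
  have hbE : ((b : E)) ^ 2 = x := by
    have h := congrArg (algebraMap ℚ⟮x⟯ E) hb
    simpa [IntermediateField.AdjoinSimple.algebraMap_gen] using h
  have hmem : (b : E) ∈ Algebra.adjoin ℚ ({x} : Set E) := by
    rw [← IntermediateField.adjoin_simple_toSubalgebra_of_isAlgebraic hint.isAlgebraic]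
    exact b.2
  rw [Algebra.adjoin_singleton_eq_range_aeval] at hmem
  obtain ⟨g, hg⟩ := hmem
  have h0 : aeval x (g ^ 2 - X) = 0 := by
    have hg' : aeval x g = (b : E) := hg
    rw [map_sub, map_pow, aeval_X, hg', hbE, sub_self]
  have hdvd := minpoly.dvd ℚ _ h0
  rw [hx] at hdvd
  exact no_sqrt_quadratic t g hdvd

lemma irr8 (t : ℚ) (ht : 0 < t) : Irreducible ((X : ℚ[X]) ^ 8 + C (t ^ 4)) := by
  have hcomp : (X : ℚ[X]) ^ 8 + C (t ^ 4) = ((X : ℚ[X]) ^ 4 + C (t ^ 4)).comp (X ^ 2) := by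
    simp only [add_comp, pow_comp, X_comp, C_comp]
    ring
  rw [hcomp]
  refine Polynomial.irreducible_comp (monic_X_pow_add_C _ four_ne_zero) (monic_X_pow 2)
    (irr4 t ht) ?_
  intro E _ _ x hx
  simp only [Polynomial.map_pow, map_X]
  apply X_pow_sub_C_irreducible_of_prime Nat.prime_two
  intro b hb
  have hint : IsIntegral ℚ x :=
    minpoly.ne_zero_iff.mp (hx ▸ (monic_X_pow_add_C (t ^ 4) four_ne_zero).ne_zero)
  have hbE : ((b : E)) ^ 2 = x := by
    have h := congrArg (algebraMap ℚ⟮x⟯ E) hb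
    simpa [IntermediateField.AdjoinSimple.algebraMap_gen] using h
  have hmem : (b : E) ∈ Algebra.adjoin ℚ ({x} : Set E) := by
    rw [← IntermediateField.adjoin_simple_toSubalgebra_of_isAlgebraic hint.isAlgebraic]
    exact b.2
  rw [Algebra.adjoin_singleton_eq_range_aeval] at hmem
  obtain ⟨g, hg⟩ := hmem
  have h0 : aeval x (g ^ 2 - X) = 0 := by
    have hg' : aeval x g = (b : E) := hg
    rw [map_sub, map_pow, aeval_X, hg', hbE, sub_self]
  have hdvd := minpoly.dvd ℚ _ h0
  rw [hx] at hdvd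
  exact no_sqrt_quartic t g hdvd

theorem stmt_0 (p : ℕ) (hp : p.Prime) (hodd : Odd p) :
    Irreducible ((X : ℚ[X]) ^ 8 + C ((p : ℚ)) ^ 4) := by
  have h : (C ((p : ℚ))) ^ 4 = C ((p : ℚ) ^ 4) := by rw [map_pow]
  rw [h]
  exact irr8 (p : ℚ) (by exact_mod_cast hp.pos)
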